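/- Converse failure of the isometric translation principle: there exists a Banach chain complex C (concentrated in degrees 0 and 1, given by the inclusion ℓ¹ ↪ c₀) and a morphism f : C → C (multiplication by a constant c with |c| ∉ {0,1}) such that H_*(f) is an isometric isomorphism, but H^1(f') is an isomorphism that is not isometric (there exist classes in H¹(C') of non-zero semi-norm, and H^1(f') multiplies the semi-norm by |c| ≠ 1). -/

import Mathlib

open scoped ZeroAtInfty

noncomputable section

/-- The Banach chain complex concentrated in degrees 0 and 1, given by the inclusion
`ℓ¹ ↪ c₀`: `C₀ = c₀`, `C₁ = ℓ¹`, `Cₙ = 0` for `n ≥ 2`. -/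
abbrev XC : ℕ → Type
  | 0 => C₀(ℕ, ℝ)
  | 1 => lp (fun _ : ℕ => ℝ) 1
  | (_ + 2) => EuclideanSpace ℝ (Fin 0)

instance : ∀ n, NormedAddCommGroup (XC n)
  | 0 => inferInstanceAs (NormedAddCommGroup C₀(ℕ, ℝ))
  | 1 => inferInstanceAs (NormedAddCommGroup (lp (fun _ : ℕ => ℝ) 1))
  | (_ + 2) => inferInstanceAs (NormedAddCommGroup (EuclideanSpace ℝ (Fin 0)))

instance : ∀ n, NormedSpace ℝ (XC n)
  | 0 => inferInstanceAs (NormedSpace ℝ C₀(ℕ, ℝ))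
  | 1 => inferInstanceAs (NormedSpace ℝ (lp (fun _ : ℕ => ℝ) 1))
  | (_ + 2) => inferInstanceAs (NormedSpace ℝ (EuclideanSpace ℝ (Fin 0)))

instance : ∀ n, CompleteSpace (XC n)
  | 0 => inferInstanceAs (CompleteSpace C₀(ℕ, ℝ))
  | 1 => inferInstanceAs (CompleteSpace (lp (fun _ : ℕ => ℝ) 1))
  | (_ + 2) => inferInstanceAs (CompleteSpace (EuclideanSpace ℝ (Fin 0)))

/-- The inclusion `ℓ¹ ↪ c₀` as a bounded linear map. -/
def incl : lp (fun _ : ℕ => ℝ) 1 →L[ℝ] C₀(ℕ, ℝ) :=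
  LinearMap.mkContinuous
    { toFun := fun f =>
        ZeroAtInftyContinuousMap.mk ⟨fun n => f n, continuous_of_discreteTopology⟩ (by
          rw [cocompact_eq_atTop]
          have hs : Summable fun n => ‖(f : ℕ → ℝ) n‖ := by
            have h := (lp.memℓp f).summable (p := 1) (by norm_num)
            simpa using h
          exact hs.of_norm.tendsto_atTop_zero)
      map_add' := by
        intro f g
        ext n
        exact congrFun (lp.coeFn_add f g) n
      map_smul' := by
        intro m f
        ext n
        exact congrFun (lp.coeFn_smul m f) n }
    1
    (by
      intro f
      rw [one_mul, ← ZeroAtInftyContinuousMap.norm_toBCF_eq_norm]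
      refine BoundedContinuousFunction.norm_le (norm_nonneg f) |>.mpr fun n => ?_
      exact lp.norm_apply_le_norm one_ne_zero f n)

/-- The boundary operators of the complex `XC`. -/
def dC : ∀ n, XC (n + 1) →L[ℝ] XC n
  | 0 => incl
  | (n + 1) => 0

/-- Cycles of a chain complex indexed over ℕ. -/
def IsCycle (C : ℕ → Type*) [∀ n, NormedAddCommGroup (C n)] [∀ n, NormedSpace ℝ (C n)]
    (d : ∀ n, C (n + 1) →L[ℝ] C n) : ∀ n, C n → Prop
  | 0, _ => True
  | (n + 1), x => d n x = 0

/-- Coboundaries of the dual cochain complex. -/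
def IsCobdry (C : ℕ → Type*) [∀ n, NormedAddCommGroup (C n)] [∀ n, NormedSpace ℝ (C n)]
    (d : ∀ n, C (n + 1) →L[ℝ] C n) : ∀ n, (C n →L[ℝ] ℝ) → Prop
  | 0, f => f = 0
  | (n + 1), f => ∃ g : C n →L[ℝ] ℝ, f = g.comp (d n)

/-- Seminorm of the homology class of a cycle. -/
def hSeminorm (C : ℕ → Type*) [∀ n, NormedAddCommGroup (C n)]
    [∀ n, NormedSpace ℝ (C n)] (d : ∀ n, C (n + 1) →L[ℝ] C n) (n : ℕ) (x : C n) : ℝ :=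
  sInf {r : ℝ | ∃ b : C (n + 1), r = ‖x - d n b‖}

/-- Seminorm of the cohomology class of a cocycle of the dual complex. -/
def cSeminorm (C : ℕ → Type*) [∀ n, NormedAddCommGroup (C n)]
    [∀ n, NormedSpace ℝ (C n)] (d : ∀ n, C (n + 1) →L[ℝ] C n) (n : ℕ)
    (φ : C n →L[ℝ] ℝ) : ℝ :=
  sInf {r : ℝ | ∃ g : C n →L[ℝ] ℝ, IsCobdry C d n g ∧ r = ‖φ - g‖}

abbrev L1 := lp (fun _ : ℕ => ℝ) 1

example (f : L1) (n : ℕ) : incl f n = f n := rfl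

example : dC 0 = incl := rfl

lemma L1.summable_norm (f : L1) : Summable fun n => ‖(f : ℕ → ℝ) n‖ := by
  have h := (lp.memℓp f).summable (p := 1) (by norm_num)
  simpa using h

lemma L1.norm_eq (f : L1) : ‖f‖ = ∑' n, ‖(f : ℕ → ℝ) n‖ := by
  have := lp.norm_eq_tsum_rpow (p := 1) (by norm_num) f
  simpa using this

lemma incl_inj {f : L1} (h : incl f = 0) : f = 0 := by
  apply lp.ext
  funext n
  have : incl f n = (0 : C₀(ℕ, ℝ)) n := by rw [h]
  simpa using (show (f : ℕ → ℝ) n = 0 from this)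

def sumF : L1 →L[ℝ] ℝ :=
  LinearMap.mkContinuous
    { toFun := fun f => ∑' n, (f : ℕ → ℝ) n
      map_add' := fun f g => by
        rw [← Summable.tsum_add (L1.summable_norm f).of_norm (L1.summable_norm g).of_norm]
        exact tsum_congr fun n => congrFun (lp.coeFn_add f g) n
      map_smul' := fun m f => by
        simp only [RingHom.id_apply, smul_eq_mul]
        rw [← tsum_mul_left]
        exact tsum_congr fun n => congrFun (lp.coeFn_smul m f) n }
    1
    (fun f => by
      rw [one_mul, L1.norm_eq]
      exact norm_tsum_le_tsum_norm (L1.summable_norm f))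

def e (n : ℕ) : L1 := lp.single 1 n (1 : ℝ)

lemma sumF_single (n : ℕ) : sumF (lp.single 1 n (1 : ℝ)) = 1 := by
  show (∑' m, (lp.single 1 n (1:ℝ) : ℕ → ℝ) m) = 1
  rw [tsum_eq_single n (fun m hm => lp.single_apply_ne 1 n 1 hm)]
  exact lp.single_apply_self 1 n 1

lemma norm_single_one (n : ℕ) : ‖e n‖ = 1 := by
  show ‖lp.single (E := fun _ : ℕ => ℝ) 1 n (1 : ℝ)‖ = 1
  have hp : 0 < (1 : ENNReal).toReal := by norm_num
  have := lp.norm_single (E := fun _ : ℕ => ℝ) (p := 1) (by norm_num) n (1:ℝ)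
  simpa using this

lemma sumF_e (n : ℕ) : sumF (e n) = 1 := sumF_single n

lemma one_le_key (g : C₀(ℕ, ℝ) →L[ℝ] ℝ) : 1 ≤ ‖sumF - g.comp incl‖ := by
  by_contra hcon
  push_neg at hcon
  set r := ‖sumF - g.comp incl‖ with hr
  have hrpos : 0 < 1 - r := by linarith
  have hδ : ∀ n : ℕ, 1 - r ≤ g (incl (e n)) := by
    intro n
    have h1 : ‖(sumF - g.comp incl) (e n)‖ ≤ r * ‖e n‖ :=
      ContinuousLinearMap.le_opNorm _ _
    rw [norm_single_one, mul_one] at h1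
    have h2 : (sumF - g.comp incl) (e n) = 1 - g (incl (e n)) := by
      simp [sumF_e n]
    rw [h2, Real.norm_eq_abs] at h1
    have := (abs_le.mp h1).2
    linarith
  obtain ⟨N, hN⟩ := exists_nat_gt (‖g‖ / (1 - r))
  have hgN : ‖g‖ < N * (1 - r) := by
    rw [div_lt_iff₀ hrpos] at hN; linarith
  set b : L1 := ∑ n ∈ Finset.range N, e n with hb
  have hbm : ∀ m, (b : ℕ → ℝ) m = if m ∈ Finset.range N then 1 else 0 := by
    intro m
    rw [hb]
    rw [lp.coeFn_sum, Finset.sum_apply]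
    simp [e, lp.single_apply, Pi.single_apply]
  have hnorm : ‖incl b‖ ≤ 1 := by
    rw [← ZeroAtInftyContinuousMap.norm_toBCF_eq_norm]
    refine BoundedContinuousFunction.norm_le (by norm_num) |>.mpr fun m => ?_
    show ‖(b : ℕ → ℝ) m‖ ≤ 1
    rw [hbm]
    split <;> simp
  have hsum : g (incl b) = ∑ n ∈ Finset.range N, g (incl (e n)) := by
    rw [hb, map_sum, map_sum]
  have hge : (N : ℝ) * (1 - r) ≤ g (incl b) := by
    rw [hsum]
    calc (N : ℝ) * (1 - r) = ∑ _n ∈ Finset.range N, (1 - r) := by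
          rw [Finset.sum_const, Finset.card_range, nsmul_eq_mul]
      _ ≤ _ := Finset.sum_le_sum fun n _ => hδ n
  have hle : g (incl b) ≤ ‖g‖ := by
    calc g (incl b) ≤ |g (incl b)| := le_abs_self _
      _ ≤ ‖g‖ * ‖incl b‖ := by rw [← Real.norm_eq_abs]; exact g.le_opNorm _
      _ ≤ ‖g‖ * 1 := mul_le_mul_of_nonneg_left hnorm (norm_nonneg g)
      _ = ‖g‖ := mul_one _
  linarith

lemma dense0 (y : C₀(ℕ, ℝ)) {ε : ℝ} (hε : 0 < ε) : ∃ b : L1, ‖y - incl b‖ ≤ ε := by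
  have hy : Filter.Tendsto (fun n => y n) Filter.atTop (nhds 0) := by
    have := zero_at_infty y
    rwa [cocompact_eq_atTop] at this
  obtain ⟨N, hN⟩ := Metric.tendsto_atTop.mp hy ε hε
  refine ⟨∑ n ∈ Finset.range N, lp.single 1 n (y n), ?_⟩
  rw [← ZeroAtInftyContinuousMap.norm_toBCF_eq_norm]
  refine BoundedContinuousFunction.norm_le hε.le |>.mpr fun m => ?_
  show ‖y m - ((∑ n ∈ Finset.range N, lp.single (E := fun _ : ℕ => ℝ) 1 n (y n) : L1) : ℕ → ℝ) m‖ ≤ ε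
  have hc : ((∑ n ∈ Finset.range N, lp.single (E := fun _ : ℕ => ℝ) 1 n (y n) : L1) : ℕ → ℝ) m
      = if m ∈ Finset.range N then y m else 0 := by
    rw [lp.coeFn_sum, Finset.sum_apply]
    simp [lp.single_apply, Pi.single_apply]
  rw [hc]
  by_cases hm : m ∈ Finset.range N
  · rw [if_pos hm, sub_self, norm_zero]; exact hε.le
  · rw [if_neg hm, sub_zero]
    have hNm : N ≤ m := le_of_not_gt (fun h => hm (Finset.mem_range.mpr h))
    have := hN m hNm
    rw [dist_zero_right] at this
    exact this.le

lemma hsem0 (y : XC 0) : hSeminorm XC dC 0 y = 0 := by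
  have hbdd : BddBelow {r : ℝ | ∃ b : XC 1, r = ‖y - dC 0 b‖} :=
    ⟨0, by rintro r ⟨b, rfl⟩; exact norm_nonneg _⟩
  refine le_antisymm (le_of_forall_pos_le_add fun ε hε => ?_)
    (le_csInf ⟨‖y - dC 0 0‖, 0, rfl⟩ (by rintro r ⟨b, rfl⟩; exact norm_nonneg _))
  obtain ⟨b, hb⟩ := dense0 y hε
  have h1 : hSeminorm XC dC 0 y ≤ ‖y - dC 0 b‖ := csInf_le hbdd ⟨b, rfl⟩
  have h2 : ‖y - dC 0 b‖ ≤ ε := hb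
  linarith

lemma isCobdry_one_iff (f : XC 1 →L[ℝ] ℝ) :
    IsCobdry XC dC 1 f ↔ ∃ g : XC 0 →L[ℝ] ℝ, f = g.comp (dC 0) := Iff.rfl

lemma cobdry_smul (a : ℝ) {g : XC 1 →L[ℝ] ℝ} (hg : IsCobdry XC dC 1 g) :
    IsCobdry XC dC 1 (a • g) := by
  rw [isCobdry_one_iff] at hg ⊢
  obtain ⟨h, rfl⟩ := hg
  exact ⟨a • h, (ContinuousLinearMap.smul_comp a h (dC 0)).symm⟩

open scoped Pointwise in
lemma cSem_smul (c : ℝ) (hc0 : c ≠ 0) (ψ : XC 1 →L[ℝ] ℝ) :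
    cSeminorm XC dC 1 (c • ψ) = |c| * cSeminorm XC dC 1 ψ := by
  have hc : (0 : ℝ) ≤ |c| := abs_nonneg c
  have hset : {r : ℝ | ∃ g, IsCobdry XC dC 1 g ∧ r = ‖c • ψ - g‖}
      = |c| • {r : ℝ | ∃ g, IsCobdry XC dC 1 g ∧ r = ‖ψ - g‖} := by
    ext r
    rw [Set.mem_smul_set]
    constructor
    · rintro ⟨g, hg, rfl⟩
      refine ⟨‖ψ - c⁻¹ • g‖, ⟨c⁻¹ • g, cobdry_smul c⁻¹ hg, rfl⟩, ?_⟩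
      rw [smul_eq_mul, ← Real.norm_eq_abs, ← norm_smul, smul_sub, smul_inv_smul₀ hc0]
    · rintro ⟨r, ⟨g, hg, rfl⟩, rfl⟩
      refine ⟨c • g, cobdry_smul c hg, ?_⟩
      rw [smul_eq_mul, ← Real.norm_eq_abs, ← norm_smul, smul_sub]
  show sInf _ = |c| * sInf _
  rw [hset, Real.sInf_smul_of_nonneg hc, smul_eq_mul]

lemma euc_subsingleton : Subsingleton (EuclideanSpace ℝ (Fin 0)) :=
  inferInstance
/-- failure of the converse of the isometric translation principle:
for the Banach chain complex `XC` concentrated in degrees 0 and 1 given by the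
inclusion `ℓ¹ ↪ c₀` and the morphism `f = c·id` (with `|c| ∉ {0, 1}`):
`H_*(f)` is an isometric isomorphism, `H^*(f')` is an isomorphism in degree 1, there
are classes in `H¹(XC')` of non-zero seminorm, `H¹(f')` multiplies the seminorm on
`H¹(XC')` by `|c|`, and in particular `H¹(f')` is not isometric. -/
theorem stmt12 (c : ℝ) (hc0 : c ≠ 0) (hc1 : |c| ≠ 1) :
    -- `H_*(f)` is an isomorphism (here `f n = c • id`) ...
    (∀ n, ∀ x : XC n, IsCycle XC dC n x → (∃ b, dC n b = c • x) → ∃ a, dC n a = x) ∧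
    (∀ n, ∀ y : XC n, IsCycle XC dC n y →
      ∃ x : XC n, IsCycle XC dC n x ∧ ∃ b, y - c • x = dC n b) ∧
    -- ... and it is isometric:
    (∀ n, ∀ x : XC n, IsCycle XC dC n x →
      hSeminorm XC dC n (c • x) = hSeminorm XC dC n x) ∧
    -- `H¹(f')` (given by `ψ ↦ ψ ∘ (c • id) = c • ψ`) is an isomorphism:
    (∀ ψ : XC 1 →L[ℝ] ℝ, IsCobdry XC dC 1 (c • ψ) → IsCobdry XC dC 1 ψ) ∧
    (∀ φ : XC 1 →L[ℝ] ℝ, ∃ ψ : XC 1 →L[ℝ] ℝ, IsCobdry XC dC 1 (φ - c • ψ)) ∧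
    -- there are classes in `H¹(XC')` of non-zero seminorm:
    (∃ ψ : XC 1 →L[ℝ] ℝ, cSeminorm XC dC 1 ψ ≠ 0) ∧
    -- `H¹(f')` multiplies the seminorm by `|c|` ...
    (∀ ψ : XC 1 →L[ℝ] ℝ, cSeminorm XC dC 1 (c • ψ) = |c| * cSeminorm XC dC 1 ψ) ∧
    -- ... and hence is not isometric:
    ¬ (∀ ψ : XC 1 →L[ℝ] ℝ, cSeminorm XC dC 1 (c • ψ) = cSeminorm XC dC 1 ψ) := by
  have hex : ∃ ψ : XC 1 →L[ℝ] ℝ, cSeminorm XC dC 1 ψ ≠ 0 := by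
    refine ⟨sumF, ?_⟩
    have h1 : (1 : ℝ) ≤ cSeminorm XC dC 1 sumF := by
      refine le_csInf ⟨‖sumF - (0 : XC 0 →L[ℝ] ℝ).comp (dC 0)‖,
        (0 : XC 0 →L[ℝ] ℝ).comp (dC 0), ⟨0, rfl⟩, rfl⟩ ?_
      rintro r ⟨g, hg, rfl⟩
      rw [isCobdry_one_iff] at hg
      obtain ⟨h, rfl⟩ := hg
      exact one_le_key h
    intro h0
    rw [h0] at h1
    linarith
  refine ⟨?_, ?_, ?_, ?_, ?_, hex, cSem_smul c hc0, ?_⟩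
  · intro n x _ hb
    match n, x, hb with
    | 0, x, ⟨b, hb⟩ =>
      refine ⟨c⁻¹ • b, ?_⟩
      show incl (c⁻¹ • b) = x
      have hb' : incl b = c • x := hb
      rw [map_smul, hb', smul_smul, inv_mul_cancel₀ hc0, one_smul]
    | (n+1), x, ⟨b, hb⟩ =>
      have h0 : c • x = 0 := by
        rw [← hb, show dC (n+1) = 0 from rfl, ContinuousLinearMap.zero_apply]
      have hx : x = 0 := by
        rcases smul_eq_zero.mp h0 with h | h
        · exact absurd h hc0
        · exact h
      exact ⟨0, by rw [map_zero, hx]⟩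
  · intro n y hy
    refine ⟨c⁻¹ • y, ?_, 0, ?_⟩
    · match n, y, hy with
      | 0, y, _ => trivial
      | (n+1), y, hy =>
        show dC n (c⁻¹ • y) = 0
        have hy' : dC n y = 0 := hy
        rw [map_smul, hy', smul_zero]
    · rw [smul_smul, mul_inv_cancel₀ hc0, one_smul, sub_self, map_zero]
  · intro n x hx
    match n, x, hx with
    | 0, x, _ => rw [hsem0, hsem0]
    | 1, x, hx =>
      have hx0 : x = 0 := incl_inj hx
      rw [hx0, smul_zero]
    | (n+2), x, _ =>
      have := euc_subsingleton
      have hx0 : c • x = x := Subsingleton.elim _ _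
      rw [hx0]
  · intro ψ hψ
    rw [isCobdry_one_iff] at hψ ⊢
    obtain ⟨g, hg⟩ := hψ
    refine ⟨c⁻¹ • g, ?_⟩
    rw [ContinuousLinearMap.smul_comp, ← hg, smul_smul, inv_mul_cancel₀ hc0, one_smul]
  · intro φ
    refine ⟨c⁻¹ • φ, ?_⟩
    rw [isCobdry_one_iff]
    exact ⟨0, by
      rw [smul_smul, mul_inv_cancel₀ hc0, one_smul, sub_self,
        ContinuousLinearMap.zero_comp]⟩
  · intro hiso
    obtain ⟨ψ, hψ⟩ := hex
    have h := hiso ψ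
    rw [cSem_smul c hc0 ψ] at h
    exact hc1 (mul_right_cancel₀ hψ (by rw [one_mul]; exact h))

end
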